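/- Let α > −1/2 be real and let P^{(∞)}_α(z) = [[1,0],[2αi,1]] · diag((z+1)^{−1/4}, (z+1)^{1/4}) · V · diag(w(z)^{−α}, w(z)^{α}) on ℂ∖(−∞,0], with w(z) = ((z+1)^{1/2}+1)/((z+1)^{1/2}−1), V = (1/√2)[[1,i],[i,1]], and principal branches of all powers. Then the limit lim_{z→0, z∉(−∞,0]} z · (d/dz P^{(∞)}_α(z)) · (P^{(∞)}_α(z))^{−1} exists and equals −iα · [[−2αi, 1],[−1 + 4α², 2αi]]. -/

import Mathlib

open Complex Matrix Filter Topology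

/-- `V = (1/√2)[[1, i], [i, 1]]`. -/
noncomputable def Vmat : Matrix (Fin 2) (Fin 2) ℂ :=
  ((Real.sqrt 2 : ℂ))⁻¹ • !![1, I; I, 1]

/-- `w(z) = ((z+1)^{1/2}+1)/((z+1)^{1/2}−1)`, principal branch. -/
noncomputable def wFun (z : ℂ) : ℂ :=
  ((z + 1) ^ ((1 : ℂ) / 2) + 1) / ((z + 1) ^ ((1 : ℂ) / 2) - 1)

/-- The global parametrix `P^{(∞)}_α`. -/
noncomputable def Pinf (α : ℝ) (z : ℂ) : Matrix (Fin 2) (Fin 2) ℂ :=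
  !![1, 0; 2 * (α : ℂ) * I, 1] *
  !![(z + 1) ^ (-(1 : ℂ) / 4), 0; 0, (z + 1) ^ ((1 : ℂ) / 4)] *
  Vmat *
  !![wFun z ^ (-(α : ℂ)), 0; 0, wFun z ^ ((α : ℂ))]

/-- The entrywise complex derivative of `P^{(∞)}_α`. -/
noncomputable def Pinf' (α : ℝ) (z : ℂ) : Matrix (Fin 2) (Fin 2) ℂ :=
  Matrix.of fun j k => deriv (fun w => Pinf α w j k) z

noncomputable def f00 (α : ℝ) (z : ℂ) : ℂ := (z+1) ^ (-(1:ℂ)/4) * wFun z ^ (-(α:ℂ))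
noncomputable def f01 (α : ℝ) (z : ℂ) : ℂ := I * ((z+1) ^ (-(1:ℂ)/4) * wFun z ^ ((α:ℂ)))
noncomputable def f10 (α : ℝ) (z : ℂ) : ℂ :=
  I * ((2*(α:ℂ) * (z+1) ^ (-(1:ℂ)/4) + (z+1) ^ ((1:ℂ)/4)) * wFun z ^ (-(α:ℂ)))
noncomputable def f11 (α : ℝ) (z : ℂ) : ℂ :=
  ((z+1) ^ ((1:ℂ)/4) - 2*(α:ℂ) * (z+1) ^ (-(1:ℂ)/4)) * wFun z ^ ((α:ℂ))

lemma Pinf_eq (α : ℝ) (z : ℂ) :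
    Pinf α z = ((Real.sqrt 2 : ℂ))⁻¹ • !![f00 α z, f01 α z; f10 α z, f11 α z] := by
  unfold Pinf Vmat f00 f01 f10 f11
  ext i j
  fin_cases i <;> fin_cases j <;>
    simp [Matrix.mul_apply, Fin.sum_univ_two] <;> ring_nf <;> simp [I_sq] <;> ring_nf

lemma invalg (α p q u v : ℂ) (hpq : p*q = 1) (huv : u*v = 1) :
    ((2⁻¹:ℂ)) • (!![p*u, I*(p*v); I*((2*α*p+q)*u), (q-2*α*p)*v] *
      !![(q-2*α*p)*v, -(I*(p*v)); -(I*((2*α*p+q)*u)), p*u]) = 1 := by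
  have hp0 : p ≠ 0 := left_ne_zero_of_mul_eq_one hpq
  have hv0 : v ≠ 0 := left_ne_zero_of_mul_eq_one (by rw [mul_comm]; exact huv)
  have hq' : q = p⁻¹ := eq_inv_of_mul_eq_one_right hpq
  have hu' : u = v⁻¹ := eq_inv_of_mul_eq_one_left huv
  subst hq' hu'
  ext i j
  fin_cases i <;> fin_cases j <;>
    simp [Matrix.mul_apply, Fin.sum_univ_two, Matrix.one_apply] <;>
    field_simp <;> ring_nf <;> simp [I_sq] <;> ring_nf

set_option maxHeartbeats 1600000 in
lemma keyalg (α z p q u v c w dc dw dp dq du dv : ℂ)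
    (hcc : c*c = z+1) (hpq : p*q = 1) (hppc : p*p*c = 1) (huv : u*v = 1)
    (hwrel : w*(c-1) = c+1) (hc1 : c-1 ≠ 0) (hw0 : w ≠ 0)
    (hdc : dc = 1/2*c*(z+1)⁻¹)
    (hdw : dw = (dc*(c-1) - (c+1)*dc)/(c-1)^2)
    (hdp : dp = -(1:ℂ)/4*p*(z+1)⁻¹) (hdq : dq = 1/4*q*(z+1)⁻¹)
    (hdu : du = -α*(u*w⁻¹)*dw) (hdv : dv = α*(v*w⁻¹)*dw) :
    z • ((2⁻¹:ℂ) • (!![dp*u + p*du, I*(dp*v+p*dv);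
        I*((2*α*dp+dq)*u + (2*α*p+q)*du), (dq-2*α*dp)*v + (q-2*α*p)*dv] *
      !![(q-2*α*p)*v, -(I*(p*v)); -(I*((2*α*p+q)*u)), p*u]))
    = (z*(z+1)⁻¹) • !![(-1:ℂ)/4, 0; -I*α, 1/4]
      + ((z+1)⁻¹) • !![-2*α^2, -I*α; -4*I*α^3, 2*α^2] + !![0,0; I*α, 0] := by
  have hp0 : p ≠ 0 := left_ne_zero_of_mul_eq_one hpq
  have hv0 : v ≠ 0 := left_ne_zero_of_mul_eq_one (by rw [mul_comm]; exact huv)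
  have hc0 : c ≠ 0 := left_ne_zero_of_mul_eq_one (by rw [mul_comm]; exact hppc)
  have hy0 : z + 1 ≠ 0 := by rw [← hcc]; exact mul_ne_zero hc0 hc0
  have h1m : (1:ℂ) - p*p ≠ 0 := fun h => hc1 (by linear_combination c*h + hppc)
  have hcp1 : c + 1 ≠ 0 := by
    intro h
    rcases mul_eq_zero.mp (hwrel.trans h) with h' | h'
    · exact hw0 h'
    · exact hc1 h'
  have h1p : (1:ℂ) + p*p ≠ 0 := fun h => hcp1 (by linear_combination c*h - hppc)
  have hz0 : z ≠ 0 := by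
    intro h
    have h2 : (c-1)*(c+1) = 0 := by linear_combination hcc + h
    rcases mul_eq_zero.mp h2 with h' | h'
    · exact hc1 h'
    · exact hcp1 h'
  have hw' : w = (c+1)/(c-1) := (eq_div_iff hc1).mpr hwrel
  have hwi : w⁻¹ = (c-1)/(c+1) := by rw [hw', inv_div]
  have hdu2 : du = α*u*(c*z)⁻¹ := by
    rw [hdu, hdw, hdc, hwi]; field_simp; ring_nf
    linear_combination (-2*α*u) * hcc
  have hdv2 : dv = -α*v*(c*z)⁻¹ := by
    rw [hdv, hdw, hdc, hwi]; field_simp; ring_nf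
    linear_combination (2*α) * hcc
  rw [hdp, hdq, hdu2, hdv2]
  have hq' : q = p⁻¹ := eq_inv_of_mul_eq_one_right hpq
  have hu' : u = v⁻¹ := eq_inv_of_mul_eq_one_left huv
  have hz' : z = c*c - 1 := by linear_combination -hcc
  subst hq' hu' hz'
  have hc' : c = (p*p)⁻¹ := eq_inv_of_mul_eq_one_right hppc
  subst hc'
  have hA : p - p^5 ≠ 0 := by
    have h := mul_ne_zero hp0 (mul_ne_zero h1m h1p)
    intro h'; exact h (by linear_combination h')
  have hB : p*v - p^5*v ≠ 0 := by
    have h := mul_ne_zero hA hv0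
    intro h'; exact h (by linear_combination h')
  have h4m : (1:ℂ) - p*p*(p*p) ≠ 0 := by
    intro h; exact (mul_ne_zero h1m h1p) (by linear_combination h)
  have h4' : (1:ℂ) - p^4 ≠ 0 := by
    intro h; exact h4m (by linear_combination h)
  ext i j
  fin_cases i <;> fin_cases j
  · simp only [Matrix.smul_apply, Matrix.add_apply, Matrix.mul_apply, Fin.sum_univ_two,
      Matrix.cons_val', Matrix.cons_val_zero, Matrix.cons_val_one, Matrix.head_cons,
      Matrix.head_fin_const, Matrix.empty_val', Matrix.cons_val_fin_one, smul_eq_mul, Matrix.of_apply, Fin.zero_eta, Fin.mk_one, Fin.isValue]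
    field_simp [h4m, h4']
    ring_nf
    try simp only [I_sq]
    try ring_nf
  · simp only [Matrix.smul_apply, Matrix.add_apply, Matrix.mul_apply, Fin.sum_univ_two,
      Matrix.cons_val', Matrix.cons_val_zero, Matrix.cons_val_one, Matrix.head_cons,
      Matrix.head_fin_const, Matrix.empty_val', Matrix.cons_val_fin_one, smul_eq_mul, Matrix.of_apply, Fin.zero_eta, Fin.mk_one, Fin.isValue]
    field_simp [h4m, h4']
    ring_nf
    try simp only [I_sq]
    try ring_nf
  · simp only [Matrix.smul_apply, Matrix.add_apply, Matrix.mul_apply, Fin.sum_univ_two,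
      Matrix.cons_val', Matrix.cons_val_zero, Matrix.cons_val_one, Matrix.head_cons,
      Matrix.head_fin_const, Matrix.empty_val', Matrix.cons_val_fin_one, smul_eq_mul, Matrix.of_apply, Fin.zero_eta, Fin.mk_one, Fin.isValue]
    field_simp [h4m, h4']
    ring_nf
    try simp only [I_sq]
    try ring_nf
  · simp only [Matrix.smul_apply, Matrix.add_apply, Matrix.mul_apply, Fin.sum_univ_two,
      Matrix.cons_val', Matrix.cons_val_zero, Matrix.cons_val_one, Matrix.head_cons,
      Matrix.head_fin_const, Matrix.empty_val', Matrix.cons_val_fin_one, smul_eq_mul, Matrix.of_apply, Fin.zero_eta, Fin.mk_one, Fin.isValue]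
    field_simp [h4m, h4']
    ring_nf
    try simp only [I_sq]
    try ring_nf


lemma hs2lem : ((Real.sqrt 2 : ℂ))⁻¹ * ((Real.sqrt 2 : ℂ))⁻¹ = (2⁻¹ : ℂ) := by
  rw [← mul_inv, ← Complex.ofReal_mul, Real.mul_self_sqrt (by norm_num : (0:ℝ) ≤ 2)]
  norm_num

/-- `z (d/dz P^{(∞)}_α(z)) (P^{(∞)}_α(z))⁻¹ → −iα [[−2αi, 1], [−1+4α², 2αi]]`
as `z → 0` in `ℂ ∖ (−∞, 0]`. -/
theorem stmt11 (α : ℝ) (hα : -1 / 2 < α) :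
    Tendsto (fun z : ℂ => z • (Pinf' α z * (Pinf α z)⁻¹))
      (𝓝[{z : ℂ | ¬(z.im = 0 ∧ z.re ≤ 0)}] 0)
      (𝓝 ((-(I * (α : ℂ))) •
        !![-(2 : ℂ) * (α : ℂ) * I, 1; -1 + 4 * (α : ℂ) ^ 2, 2 * (α : ℂ) * I])) := by
  have hkey : ∀ᶠ z in 𝓝[{z : ℂ | ¬(z.im = 0 ∧ z.re ≤ 0)}] (0:ℂ),
      z • (Pinf' α z * (Pinf α z)⁻¹)
        = (z*(z+1)⁻¹) • !![(-1:ℂ)/4, 0; -I*(α:ℂ), 1/4]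
          + ((z+1)⁻¹) • !![-2*(α:ℂ)^2, -I*(α:ℂ); -4*I*(α:ℂ)^3, 2*(α:ℂ)^2]
          + !![0,0; I*(α:ℂ), 0] := by
    filter_upwards [self_mem_nhdsWithin] with z hz
    -- hz is already in propositional form
    have hz0 : z ≠ 0 := by rintro rfl; exact hz (by simp)
    have hyS : z + 1 ∈ slitPlane := by
      rw [mem_slitPlane_iff]
      by_cases him : z.im = 0
      · left
        have hre : ¬ z.re ≤ 0 := fun h => hz ⟨him, h⟩
        simp only [Complex.add_re, Complex.one_re]
        linarith [not_le.mp hre]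
      · right; simpa using him
    have hy0 : z + 1 ≠ 0 := slitPlane_ne_zero hyS
    set c := (z+1) ^ ((1:ℂ)/2) with hc_def
    set p := (z+1) ^ (-(1:ℂ)/4) with hp_def
    set q := (z+1) ^ ((1:ℂ)/4) with hq_def
    set u := wFun z ^ (-(α:ℂ)) with hu_def
    set v := wFun z ^ ((α:ℂ)) with hv_def
    have hcc : c * c = z + 1 := by
      rw [hc_def, ← Complex.cpow_add _ _ hy0]; norm_num
    have hpq : p * q = 1 := by
      rw [hp_def, hq_def, ← Complex.cpow_add _ _ hy0]; norm_num
    have hppc : p * p * c = 1 := by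
      rw [hp_def, hc_def, ← Complex.cpow_add _ _ hy0, ← Complex.cpow_add _ _ hy0]; norm_num
    have hc0 : c ≠ 0 := left_ne_zero_of_mul_eq_one (by rw [mul_comm] at hppc; exact hppc)
    have hc1 : c - 1 ≠ 0 := fun h => hz0 (by linear_combination -hcc + (c+1)*h)
    have hcp1 : c + 1 ≠ 0 := fun h => hz0 (by linear_combination -hcc + (c-1)*h)
    have hwz : wFun z = (c+1)/(c-1) := by rw [wFun]
    have hw0 : wFun z ≠ 0 := by rw [hwz]; exact div_ne_zero hcp1 hc1
    have hwrel : wFun z * (c-1) = c+1 := by rw [hwz]; field_simp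
    have huv : u * v = 1 := by
      rw [hu_def, hv_def, ← Complex.cpow_add _ _ hw0]; simp
    have hwS : wFun z ∈ slitPlane := by
      rw [mem_slitPlane_iff]
      by_contra hns
      push_neg at hns
      obtain ⟨hre, him⟩ := hns
      set t := (wFun z).re with ht
      have hwt : wFun z = (t : ℂ) := by apply Complex.ext <;> simp [him, ht]
      have htle : t ≤ 0 := hre
      have hw1 : wFun z - 1 ≠ 0 := by
        rw [hwt]; intro h
        have h1 : (t:ℂ) = 1 := by linear_combination h
        have h2 : t = 1 := by exact_mod_cast h1
        linarith
      have hceq : c * (wFun z - 1) = wFun z + 1 := by linear_combination hwrel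
      have hc2 : c = (wFun z + 1)/(wFun z - 1) := (eq_div_iff hw1).mpr hceq
      have hc3 : c = (((t+1)/(t-1) : ℝ) : ℂ) := by rw [hc2, hwt]; push_cast; ring
      have hzre : z = ((((t+1)/(t-1))^2 - 1 : ℝ) : ℂ) := by
        have h4 : z = c*c - 1 := by linear_combination -hcc
        rw [h4, hc3]; push_cast; ring
      apply hz
      constructor
      · rw [hzre]; exact Complex.ofReal_im _
      · rw [hzre]; simp only [Complex.ofReal_re]
        have h5 : (0:ℝ) < (t-1)^2 := by nlinarith [sq_nonneg t]
        have h6 : ((t+1)/(t-1))^2 ≤ 1 := by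
          rw [div_pow, div_le_one h5]; nlinarith
        linarith
    -- derivatives
    have hid : HasDerivAt (fun y : ℂ => y + 1) 1 z := (hasDerivAt_id z).add_const 1
    have hp' : HasDerivAt (fun y : ℂ => (y+1) ^ (-(1:ℂ)/4)) (-(1:ℂ)/4*p*(z+1)⁻¹) z := by
      have h := hid.cpow_const (c := -(1:ℂ)/4) hyS
      rw [show (-(1:ℂ)/4 - 1) = (-(1:ℂ)/4) + (-1) by ring, Complex.cpow_add _ _ hy0,
        Complex.cpow_neg_one, ← hp_def] at h
      convert h using 1; ring
    have hq' : HasDerivAt (fun y : ℂ => (y+1) ^ ((1:ℂ)/4)) ((1:ℂ)/4*q*(z+1)⁻¹) z := by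
      have h := hid.cpow_const (c := (1:ℂ)/4) hyS
      rw [show ((1:ℂ)/4 - 1) = ((1:ℂ)/4) + (-1) by ring, Complex.cpow_add _ _ hy0,
        Complex.cpow_neg_one, ← hq_def] at h
      convert h using 1; ring
    have hcd : HasDerivAt (fun y : ℂ => (y+1) ^ ((1:ℂ)/2)) (1/2*c*(z+1)⁻¹) z := by
      have h := hid.cpow_const (c := (1:ℂ)/2) hyS
      rw [show ((1:ℂ)/2 - 1) = ((1:ℂ)/2) + (-1) by ring, Complex.cpow_add _ _ hy0,
        Complex.cpow_neg_one, ← hc_def] at h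
      convert h using 1; ring
    have hwd : HasDerivAt wFun
        ((1/2*c*(z+1)⁻¹*(c-1) - (c+1)*(1/2*c*(z+1)⁻¹))/(c-1)^2) z := by
      have h := (hcd.add_const 1).div (hcd.sub_const 1) (by rw [← hc_def] at *; exact hc1)
      exact h
    have hud : HasDerivAt (fun y => wFun y ^ (-(α:ℂ)))
        (-(α:ℂ) * (u * (wFun z)⁻¹) *
          ((1/2*c*(z+1)⁻¹*(c-1) - (c+1)*(1/2*c*(z+1)⁻¹))/(c-1)^2)) z := by
      have h := hwd.cpow_const (c := -(α:ℂ)) hwS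
      rw [show (-(α:ℂ) - 1) = (-(α:ℂ)) + (-1) by ring, Complex.cpow_add _ _ hw0,
        Complex.cpow_neg_one, ← hu_def] at h
      exact h
    have hvd : HasDerivAt (fun y => wFun y ^ ((α:ℂ)))
        ((α:ℂ) * (v * (wFun z)⁻¹) *
          ((1/2*c*(z+1)⁻¹*(c-1) - (c+1)*(1/2*c*(z+1)⁻¹))/(c-1)^2)) z := by
      have h := hwd.cpow_const (c := (α:ℂ)) hwS
      rw [show ((α:ℂ) - 1) = ((α:ℂ)) + (-1) by ring, Complex.cpow_add _ _ hw0,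
        Complex.cpow_neg_one, ← hv_def] at h
      exact h
    set s : ℂ := ((Real.sqrt 2 : ℂ))⁻¹ with hs_def
    set dw : ℂ := ((1/2*c*(z+1)⁻¹*(c-1) - (c+1)*(1/2*c*(z+1)⁻¹))/(c-1)^2) with hdw_def
    set dp : ℂ := -(1:ℂ)/4*p*(z+1)⁻¹ with hdp_def
    set dq : ℂ := (1:ℂ)/4*q*(z+1)⁻¹ with hdq_def
    set du : ℂ := -(α:ℂ) * (u * (wFun z)⁻¹) * dw with hdu_def
    set dv : ℂ := (α:ℂ) * (v * (wFun z)⁻¹) * dw with hdv_def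
    have hP'mat : Pinf' α z = s • !![dp*u + p*du, I*(dp*v+p*dv);
        I*((2*(α:ℂ)*dp+dq)*u + (2*(α:ℂ)*p+q)*du),
        (dq-2*(α:ℂ)*dp)*v + (q-2*(α:ℂ)*p)*dv] := by
      ext i j
      fin_cases i <;> fin_cases j
      · show deriv (fun y => Pinf α y 0 0) z = s * (dp*u + p*du)
        have hfun : (fun y => Pinf α y 0 0) = fun y => s * (f00 α y) := by
          funext y; rw [Pinf_eq]; simp [hs_def]
        rw [hfun]
        exact ((hp'.mul hud).const_mul s).deriv
      · show deriv (fun y => Pinf α y 0 1) z = s * (I*(dp*v+p*dv))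
        have hfun : (fun y => Pinf α y 0 1) = fun y => s * (f01 α y) := by
          funext y; rw [Pinf_eq]; simp [hs_def]
        rw [hfun]
        exact (((hp'.mul hvd).const_mul I).const_mul s).deriv
      · show deriv (fun y => Pinf α y 1 0) z = s * (I*((2*(α:ℂ)*dp+dq)*u + (2*(α:ℂ)*p+q)*du))
        have hfun : (fun y => Pinf α y 1 0) = fun y => s * (f10 α y) := by
          funext y; rw [Pinf_eq]; simp [hs_def]
        rw [hfun]
        exact (((((hp'.const_mul (2*(α:ℂ))).add hq').mul hud).const_mul I).const_mul s).deriv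
      · show deriv (fun y => Pinf α y 1 1) z = s * ((dq-2*(α:ℂ)*dp)*v + (q-2*(α:ℂ)*p)*dv)
        have hfun : (fun y => Pinf α y 1 1) = fun y => s * (f11 α y) := by
          funext y; rw [Pinf_eq]; simp [hs_def]
        rw [hfun]
        exact (((hq'.sub (hp'.const_mul (2*(α:ℂ)))).mul hvd).const_mul s).deriv
    have hQmat : (Pinf α z)⁻¹ = s • !![f11 α z, -f01 α z; -f10 α z, f00 α z] := by
      apply inv_eq_right_inv
      rw [Pinf_eq, Matrix.smul_mul, Matrix.mul_smul, smul_smul, hs_def, hs2lem]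
      exact invalg (α:ℂ) p q u v hpq huv
    rw [hP'mat, hQmat, Matrix.smul_mul, Matrix.mul_smul, smul_smul s s,
      show s * s = (2⁻¹:ℂ) by rw [hs_def]; exact hs2lem]
    exact keyalg (α:ℂ) z p q u v c (wFun z) (1/2*c*(z+1)⁻¹) dw dp dq du dv
      hcc hpq hppc huv hwrel hc1 hw0 rfl hdw_def hdp_def hdq_def hdu_def hdv_def
  rw [tendsto_congr' hkey]
  have h1 : Tendsto (fun z : ℂ => z * (z+1)⁻¹) (𝓝 0) (𝓝 0) := by
    have hca : ContinuousAt (fun z : ℂ => z * (z+1)⁻¹) 0 :=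
      continuousAt_id.mul ((continuousAt_id.add continuousAt_const).inv₀ (by norm_num))
    simpa using hca.tendsto
  have h2 : Tendsto (fun z : ℂ => (z+1)⁻¹) (𝓝 0) (𝓝 1) := by
    have hca : ContinuousAt (fun z : ℂ => (z+1)⁻¹) 0 :=
      (continuousAt_id.add continuousAt_const).inv₀ (by norm_num)
    simpa using hca.tendsto
  have h3 := ((h1.smul_const (!![(-1:ℂ)/4, 0; -I*(α:ℂ), 1/4])).add
      (h2.smul_const (!![-2*(α:ℂ)^2, -I*(α:ℂ); -4*I*(α:ℂ)^3, 2*(α:ℂ)^2]))).add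
      (tendsto_const_nhds (x := !![(0:ℂ),0; I*(α:ℂ), 0]))
  have hlim : (0:ℂ) • !![(-1:ℂ)/4, 0; -I*(α:ℂ), 1/4]
      + (1:ℂ) • !![-2*(α:ℂ)^2, -I*(α:ℂ); -4*I*(α:ℂ)^3, 2*(α:ℂ)^2]
      + !![(0:ℂ),0; I*(α:ℂ), 0]
      = (-(I * (α : ℂ))) •
        !![-(2 : ℂ) * (α : ℂ) * I, 1; -1 + 4 * (α : ℂ) ^ 2, 2 * (α : ℂ) * I] := by
    ext i j
    fin_cases i <;> fin_cases j <;>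
      simp [Matrix.smul_apply] <;> ring_nf <;> simp [I_sq] <;> ring_nf
  rw [hlim] at h3
  exact h3.mono_left nhdsWithin_le_nhds
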